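/- Let K/F be a cyclic Galois field extension of degree n with Galois group generated by τ. Then every F-linear endomorphism f of K can be written uniquely in the form f = Σ_{i=0}^{n-1} L(yᵢ)∘τⁱ for some y₀,…,y_{n-1} ∈ K, where L(y) denotes multiplication by y on K. -/

import Mathlib

/-- Every F-linear endomorphism of a degree-n cyclic Galois extension K/F with
Galois group generated by τ is uniquely of the form Σᵢ L(yᵢ)∘τⁱ. -/
theorem stmt8 {F K : Type*} [Field F] [Field K] [Algebra F K] [FiniteDimensional F K]
    [IsGalois F K] (n : ℕ) (hn : Module.finrank F K = n)
    (τ : K ≃ₐ[F] K) (hτ : ∀ σ : K ≃ₐ[F] K, σ ∈ Subgroup.zpowers τ)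
    (f : K →ₗ[F] K) :
    ∃! y : Fin n → K,
      f = ∑ i : Fin n, LinearMap.mul F K (y i) ∘ₗ (τ ^ (i : ℕ)).toLinearMap := by
  classical
  have hn0 : 0 < n := hn ▸ Module.finrank_pos
  haveI : Nonempty (Fin n) := ⟨⟨0, hn0⟩⟩
  -- order of τ is n
  have horder : orderOf τ = n := by
    rw [orderOf_eq_card_of_forall_mem_zpowers hτ,
      IsGalois.card_aut_eq_finrank, hn]
  set b : Fin n → (K →ₗ[F] K) := fun i => (τ ^ (i : ℕ)).toLinearMap with hb
  -- rewrite the sum using K-scalar action on K →ₗ[F] K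
  have key : ∀ (y : Fin n → K),
      (∑ i : Fin n, LinearMap.mul F K (y i) ∘ₗ (τ ^ (i : ℕ)).toLinearMap)
        = ∑ i : Fin n, y i • b i := by
    intro y
    refine Finset.sum_congr rfl fun i _ => ?_
    ext x
    simp [hb, Module.End.mul_apply, smul_eq_mul]
  -- coercion map is K-linear and injective
  let φ : (K →ₗ[F] K) →ₗ[K] (K → K) :=
    { toFun := fun g => ⇑g
      map_add' := fun g h => rfl
      map_smul' := fun c g => rfl }
  have hli : LinearIndependent K b := by
    have hinj : Function.Injective (fun i : Fin n => ((τ ^ (i : ℕ) : K ≃ₐ[F] K) : K →* K)) := by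
      intro i j hij
      have : τ ^ (i : ℕ) = τ ^ (j : ℕ) := by
        ext x
        exact congrArg (fun (g : K →* K) => g x) hij
      have := pow_injOn_Iio_orderOf (x := τ) (by simpa [horder] using i.2)
        (by simpa [horder] using j.2) this
      exact Fin.ext this
    have h1 : LinearIndependent K
        (fun i : Fin n => (((τ ^ (i : ℕ) : K ≃ₐ[F] K) : K →* K) : K → K)) :=
      (linearIndependent_monoidHom K K).comp _ hinj
    refine LinearIndependent.of_comp φ ?_
    exact h1
  have hcard : Fintype.card (Fin n) = Module.finrank K (K →ₗ[F] K) := by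
    have h1 : Module.finrank F (K →ₗ[F] K) = n * n := by
      rw [Module.finrank_linearMap, hn]
    have h2 : Module.finrank F K * Module.finrank K (K →ₗ[F] K)
        = Module.finrank F (K →ₗ[F] K) := Module.finrank_mul_finrank F K _
    rw [hn, h1] at h2
    simpa using (Nat.eq_of_mul_eq_mul_left hn0 h2).symm
  let B : Module.Basis (Fin n) K (K →ₗ[F] K) :=
    basisOfLinearIndependentOfCardEqFinrank hli hcard
  have hB : ⇑B = b := coe_basisOfLinearIndependentOfCardEqFinrank hli hcard
  refine ⟨fun i => B.repr f i, ?_, ?_⟩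
  · show f = _
    rw [key]
    conv_lhs => rw [← B.sum_repr f]
    simp [hB]
  · intro z hz
    rw [key] at hz
    funext i
    have : B.repr f = B.repr (∑ i : Fin n, z i • b i) := by rw [← hz]
    rw [this]
    simp [← hB, Module.Basis.repr_sum_self, Finsupp.single_apply, Finset.sum_ite_eq']
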